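/- Let 0 < α < 1, λ > 0, and let s ∈ ℝ satisfy s > λ^{1/α}. Then the improper integral ∫_0^∞ e^{−st} E_α(−λ t^α) dt converges and equals s^{α−1}/(s^α + λ). -/

import Mathlib

open Real Set MeasureTheory
open scoped ENNReal NNReal

/-- Two-parameter Mittag-Leffler function of a real argument; terms at poles of Γ
are interpreted as 0 (in Lean, division by Γ = 0 gives 0). -/
noncomputable def mittagLeffler (α σ x : ℝ) : ℝ :=
  ∑' k : ℕ, x ^ k / Real.Gamma (α * (k : ℝ) + σ)

theorem laplace_transform_mittagLeffler (α lam s : ℝ) (hα0 : 0 < α) (hα1 : α < 1)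
    (hlam : 0 < lam) (hs : lam ^ (1 / α) < s) :
    IntegrableOn (fun t : ℝ => Real.exp (-(s * t)) * mittagLeffler α 1 (-lam * t ^ α))
      (Ioi 0) ∧
    (∫ t in Ioi (0:ℝ), Real.exp (-(s * t)) * mittagLeffler α 1 (-lam * t ^ α))
      = s ^ (α - 1) / (s ^ α + lam) := by
  have hlam0 : (0:ℝ) < lam ^ (1/α) := Real.rpow_pos_of_pos hlam _
  have hs0 : 0 < s := hlam0.trans hs
  have hA : 0 < s ^ α := Real.rpow_pos_of_pos hs0 α
  have hkey : lam < s ^ α := by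
    have h1 : (lam ^ (1/α)) ^ α < s ^ α :=
      Real.rpow_lt_rpow hlam0.le hs hα0
    rwa [← Real.rpow_mul hlam.le, one_div, inv_mul_cancel₀ hα0.ne', Real.rpow_one] at h1
  set μ : Measure ℝ := volume.restrict (Ioi 0) with hμ
  -- the summand functions
  set F : ℕ → ℝ → ℝ := fun k t =>
    ((-lam) ^ k / Real.Gamma (α * (k:ℝ) + 1)) * (t ^ (α * (k:ℝ) + 1 - 1) * Real.exp (-(s * t)))
    with hF
  have hapos : ∀ k : ℕ, (0:ℝ) < α * (k:ℝ) + 1 := by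
    intro k
    have : (0:ℝ) ≤ α * k := by positivity
    linarith
  have hGpos : ∀ k : ℕ, 0 < Real.Gamma (α * (k:ℝ) + 1) := fun k =>
    Real.Gamma_pos_of_pos (hapos k)
  -- each F k is integrable on Ioi 0
  have hFint : ∀ k : ℕ, Integrable (F k) μ := by
    intro k
    have h1 : IntegrableOn (fun t : ℝ => t ^ (α * (k:ℝ)) * Real.exp (-s * t ^ (1:ℝ)))
        (Ioi 0) := by
      refine integrableOn_rpow_mul_exp_neg_mul_rpow ?_ one_pos hs0
      have : (0:ℝ) ≤ α * k := by positivity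
      linarith
    have h2 : IntegrableOn (fun t : ℝ => t ^ (α * (k:ℝ) + 1 - 1) * Real.exp (-(s * t)))
        (Ioi 0) := by
      refine h1.congr_fun (fun t _ => ?_) measurableSet_Ioi
      simp only [Real.rpow_one]
      ring_nf
    exact h2.const_mul _
  -- the integral of each F k
  have hFval : ∀ k : ℕ, ∫ t, F k t ∂μ = (-lam) ^ k * (1/s) ^ (α * (k:ℝ) + 1) := by
    intro k
    rw [hμ, hF]
    rw [MeasureTheory.integral_const_mul,
      Real.integral_rpow_mul_exp_neg_mul_Ioi (hapos k) hs0]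
    field_simp
  -- the integral of the norm of each F k
  have hFnormval : ∀ k : ℕ,
      ∫ t, ‖F k t‖ ∂μ = lam ^ k * (1/s) ^ (α * (k:ℝ) + 1) := by
    intro k
    have : ∀ t ∈ Ioi (0:ℝ), ‖F k t‖ =
        (lam ^ k / Real.Gamma (α * (k:ℝ) + 1)) *
          (t ^ (α * (k:ℝ) + 1 - 1) * Real.exp (-(s * t))) := by
      intro t ht
      have ht0 : (0:ℝ) < t := ht
      have h1 : (0:ℝ) ≤ t ^ (α * (k:ℝ) + 1 - 1) := Real.rpow_nonneg ht0.le _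
      rw [hF, Real.norm_eq_abs, abs_mul]
      rw [abs_of_nonneg (by positivity : (0:ℝ) ≤ t ^ (α * (k:ℝ) + 1 - 1) * Real.exp (-(s*t)))]
      congr 1
      rw [abs_div, abs_pow, abs_neg, abs_of_pos hlam, abs_of_pos (hGpos k)]
    rw [hμ, MeasureTheory.setIntegral_congr_fun measurableSet_Ioi this,
      MeasureTheory.integral_const_mul,
      Real.integral_rpow_mul_exp_neg_mul_Ioi (hapos k) hs0]
    field_simp
  -- geometric ratio
  set r : ℝ := lam * (1/s) ^ α with hr
  have hrval : r = lam / s ^ α := by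
    rw [hr, one_div, Real.inv_rpow hs0.le, div_eq_mul_inv]
  have hr0 : 0 ≤ r := by rw [hrval]; positivity
  have hr1 : r < 1 := by
    rw [hrval, div_lt_one hA]; exact hkey
  have hcsimp : ∀ (x : ℝ) (k : ℕ),
      x ^ k * (1/s) ^ (α * (k:ℝ) + 1) = (x * (1/s) ^ α) ^ k * (1/s) := by
    intro x k
    have h1s : (0:ℝ) < 1/s := by positivity
    rw [Real.rpow_add h1s, Real.rpow_one, Real.rpow_mul h1s.le,
      Real.rpow_natCast, mul_pow]
    ring
  have hnorm : Summable fun k : ℕ => ∫ t, ‖F k t‖ ∂μ := by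
    have : (fun k : ℕ => ∫ t, ‖F k t‖ ∂μ) = fun k : ℕ => (1/s) * r ^ k := by
      funext k; rw [hFnormval k, hcsimp, ← hr]; ring
    rw [this]
    exact (summable_geometric_of_lt_one hr0 hr1).mul_left _
  -- finiteness of the lintegrals
  have hlint : ∑' k : ℕ, ∫⁻ t, ‖F k t‖₊ ∂μ ≠ ⊤ := by
    have key : ∀ k : ℕ, ∫⁻ t, ‖F k t‖₊ ∂μ = ENNReal.ofReal (∫ t, ‖F k t‖ ∂μ) := by
      intro k
      rw [MeasureTheory.lintegral_coe_eq_integral (fun t => ‖F k t‖₊)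
        (by simpa [coe_nnnorm] using (hFint k).norm)]
      simp [coe_nnnorm]
    rw [funext key, ← ENNReal.ofReal_tsum_of_nonneg
      (fun k => integral_nonneg fun t => norm_nonneg _) hnorm]
    exact ENNReal.ofReal_ne_top
  have hmeas : ∀ k : ℕ, AEStronglyMeasurable (F k) μ := fun k => (hFint k).1
  have hmeas' : ∀ k : ℕ, AEMeasurable (fun t => (‖F k t‖₊ : ℝ≥0∞)) μ := fun k =>
    (hmeas k).enorm
  -- a.e. summability
  have hae : ∀ᵐ t ∂μ, Summable fun k : ℕ => ‖F k t‖₊ := by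
    have h1 : ∫⁻ t, ∑' k : ℕ, (‖F k t‖₊ : ℝ≥0∞) ∂μ ≠ ⊤ := by
      rwa [MeasureTheory.lintegral_tsum hmeas']
    filter_upwards [MeasureTheory.ae_lt_top' (AEMeasurable.ennreal_tsum hmeas')
      h1] with t ht
    rw [← ENNReal.tsum_coe_ne_top_iff_summable]
    exact ht.ne
  -- integrability of the pointwise tsum
  have hInt : Integrable (fun t => ∑' k : ℕ, F k t) μ := by
    constructor
    · refine aestronglyMeasurable_of_tendsto_ae Filter.atTop
        (fun n : ℕ => (Finset.range n).aestronglyMeasurable_sum fun k _ => hmeas k) ?_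
      filter_upwards [hae] with t ht
      simpa only [Finset.sum_apply] using (NNReal.summable_coe.mpr ht).of_norm.hasSum.tendsto_sum_nat
    · show ∫⁻ t, (‖∑' k : ℕ, F k t‖₊ : ℝ≥0∞) ∂μ < ⊤
      calc ∫⁻ t, (‖∑' k : ℕ, F k t‖₊ : ℝ≥0∞) ∂μ
          ≤ ∫⁻ t, ∑' k : ℕ, (‖F k t‖₊ : ℝ≥0∞) ∂μ := by
            refine lintegral_mono_ae ?_
            filter_upwards [hae] with t ht
            calc (‖∑' k : ℕ, F k t‖₊ : ℝ≥0∞)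
                ≤ ((∑' k : ℕ, ‖F k t‖₊ : ℝ≥0) : ℝ≥0∞) := by
                  exact_mod_cast nnnorm_tsum_le ht
              _ = ∑' k : ℕ, (‖F k t‖₊ : ℝ≥0∞) := ENNReal.coe_tsum ht
        _ = ∑' k : ℕ, ∫⁻ t, (‖F k t‖₊ : ℝ≥0∞) ∂μ := MeasureTheory.lintegral_tsum hmeas'
        _ < ⊤ := hlint.lt_top
  -- pointwise identity of the integrand with the tsum
  have hEq : EqOn (fun t : ℝ => Real.exp (-(s * t)) * mittagLeffler α 1 (-lam * t ^ α))
      (fun t => ∑' k : ℕ, F k t) (Ioi 0) := by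
    intro t ht
    have ht0 : (0:ℝ) < t := ht
    simp only [mittagLeffler]
    rw [← tsum_mul_left]
    congr 1
    funext k
    have hpow : (t ^ α) ^ k = t ^ (α * (k:ℝ)) := by
      rw [← Real.rpow_natCast (t ^ α) k, ← Real.rpow_mul ht0.le]
    rw [hF]
    simp only [mul_pow, hpow, add_sub_cancel_right]
    ring
  have hInt' : IntegrableOn
      (fun t : ℝ => Real.exp (-(s * t)) * mittagLeffler α 1 (-lam * t ^ α)) (Ioi 0) := by
    exact IntegrableOn.congr_fun hInt (fun t ht => (hEq ht).symm) measurableSet_Ioi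
  refine ⟨hInt', ?_⟩
  rw [MeasureTheory.setIntegral_congr_fun measurableSet_Ioi hEq]
  have hswap : ∫ t, (∑' k : ℕ, F k t) ∂μ = ∑' k : ℕ, ∫ t, F k t ∂μ :=
    MeasureTheory.integral_tsum hmeas hlint
  rw [hμ] at hswap
  rw [hswap]
  have : (fun k : ℕ => ∫ t, F k t ∂μ) = fun k : ℕ => (1/s) * (-r) ^ k := by
    funext k
    rw [hFval k, hcsimp, hr]
    ring_nf
  rw [← hμ, this, tsum_mul_left, tsum_geometric_of_abs_lt_one (by
    rw [abs_neg, abs_of_nonneg hr0]; exact hr1)]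
  rw [hrval, Real.rpow_sub hs0, Real.rpow_one]
  have hden : s ^ α + lam ≠ 0 := by positivity
  field_simp
  rw [sub_neg_eq_add, div_self hden]
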